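/- Let φ₂ : ℕ → ℕ (where ℕ = {1, 2, 3, …}) be defined by φ₂(1) = φ₂(2) = 3 and φ₂(n) = 2n for n ≥ 3, and let X = {0, 1} with the discrete topology. Then the generalized shift dynamical system (X^ℕ, σ_{φ₂}) is Li-Yorke sensitive. -/

import Mathlib

open Filter Topology

open scoped Classical in
/-- The metric `D(x, y) = ∑_{n ≥ 1} δ(x_n, y_n) / 2^n` on `X^ℕ`, `ℕ = {1, 2, 3, …}`. -/
noncomputable def pD {X : Type*} (x y : ℕ+ → X) : ℝ :=
  ∑' n : ℕ+, (if x n = y n then (0 : ℝ) else 1) / 2 ^ (n : ℕ)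

/-- The generalized shift `σ_φ` on `X^ℕ`, `ℕ = {1, 2, 3, …}`. -/
def pshift {X : Type*} (φ : ℕ+ → ℕ+) : (ℕ+ → X) → (ℕ+ → X) := fun x => x ∘ φ

/-- `(x, y)` is a scrambled pair of `f` with respect to the distance function `d`. -/
def scrambledPair {Z : Type*} (d : Z → Z → ℝ) (f : Z → Z) (x y : Z) : Prop :=
  liminf (fun n : ℕ => d (f^[n] x) (f^[n] y)) atTop = 0 ∧
    0 < limsup (fun n : ℕ => d (f^[n] x) (f^[n] y)) atTop

/-- `φ₂(1) = φ₂(2) = 3` and `φ₂(n) = 2n` for `n ≥ 3`. -/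
def phi2 : ℕ+ → ℕ+ := fun n => if n ≤ 2 then 3 else 2 * n

namespace Stmt14Aux

open scoped Classical

lemma summable_half : Summable (fun n : ℕ => (1/2 : ℝ) ^ n) :=
  summable_geometric_of_lt_one (by norm_num) (by norm_num)

lemma summable_half_pnat : Summable (fun k : ℕ+ => (1/2 : ℝ) ^ (k : ℕ)) :=
  summable_half.comp_injective PNat.coe_injective

lemma term_le {X : Type*} (x y : ℕ+ → X) (k : ℕ+) :
    (if x k = y k then (0 : ℝ) else 1) / 2 ^ (k : ℕ) ≤ (1/2 : ℝ) ^ (k : ℕ) := by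
  rw [div_pow, one_pow]
  gcongr
  split <;> norm_num

lemma summable_aux {X : Type*} (x y : ℕ+ → X) :
    Summable (fun k : ℕ+ => (if x k = y k then (0:ℝ) else 1) / 2 ^ (k : ℕ)) := by
  apply Summable.of_nonneg_of_le (fun k => by positivity) (term_le x y) summable_half_pnat

lemma pD_nonneg {X : Type*} (x y : ℕ+ → X) : 0 ≤ pD x y :=
  tsum_nonneg (fun k => by positivity)

end Stmt14Aux

namespace Stmt14Aux

lemma pD_le {X : Type*} (x y : ℕ+ → X) (L : ℕ)
    (h : ∀ k : ℕ+, (k : ℕ) ≤ L → x k = y k) :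
    pD x y ≤ (1/2 : ℝ) ^ L := by
  classical
  set H : ℕ → ℝ := fun n => if n ≤ L then 0 else (1/2:ℝ)^n with hH
  have hHle : ∀ n, H n ≤ (1/2:ℝ)^n := by
    intro n; simp only [hH]; split
    · positivity
    · exact le_rfl
  have hHnn : ∀ n, 0 ≤ H n := by
    intro n; simp only [hH]; split <;> positivity
  have hHsum : Summable H := Summable.of_nonneg_of_le hHnn hHle summable_half
  have h1 : pD x y ≤ ∑' k : ℕ+, H (k : ℕ) := by
    refine Summable.tsum_le_tsum ?_ (summable_aux x y) (hHsum.comp_injective PNat.coe_injective)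
    intro k
    by_cases hk : (k:ℕ) ≤ L
    · simp [hH, hk, h k hk]
    · simpa [hH, hk] using term_le x y k
  have h2 : ∑' k : ℕ+, H (k:ℕ) = ∑' n : ℕ, H (n+1) := by
    rw [← Equiv.tsum_eq Equiv.pnatEquivNat.symm (fun k : ℕ+ => H (k:ℕ))]
    refine tsum_congr fun n => ?_
    congr 1
  have hsum2 : Summable (fun n : ℕ => H (n+1)) := (summable_nat_add_iff 1).mpr hHsum
  have h3 : ∑' n : ℕ, H (n+1) = (1/2:ℝ)^L := by
    have key := Summable.sum_add_tsum_nat_add (f := fun n => H (n+1)) L hsum2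
    have hz : ∑ i ∈ Finset.range L, H (i+1) = 0 :=
      Finset.sum_eq_zero fun i hi => by
        simp only [hH]
        rw [if_pos (by simpa using Finset.mem_range.mp hi)]
    have ht : ∑' n : ℕ, H (n + L + 1) = (1/2:ℝ)^L := by
      have hc : ∀ n : ℕ, H (n + L + 1) = (1/2:ℝ)^(L+1) * (1/2)^n := by
        intro n; simp only [hH]; rw [if_neg (by omega)]; ring
      rw [tsum_congr hc, tsum_mul_left, tsum_geometric_of_lt_one (by norm_num) (by norm_num)]
      rw [pow_succ, mul_assoc]
      norm_num
    rw [hz, zero_add] at key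
    rw [← key]
    simpa using ht
  exact h1.trans_eq (h2.trans h3)

lemma pD_ge {X : Type*} (x y : ℕ+ → X) (h1 : x 1 ≠ y 1) (h2 : x 2 ≠ y 2) :
    (3/4 : ℝ) ≤ pD x y := by
  classical
  have key := Summable.sum_le_tsum ({1, 2} : Finset ℕ+) (fun k _ => by positivity) (summable_aux x y)
  refine le_trans ?_ key
  rw [Finset.sum_insert (by decide), Finset.sum_singleton]
  rw [if_neg h1, if_neg h2]
  norm_num

end Stmt14Aux

namespace Stmt14Aux

lemma pshift_iter {X : Type*} (φ : ℕ+ → ℕ+) (n : ℕ) (x : ℕ+ → X) (k : ℕ+) :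
    (pshift φ)^[n] x k = x (φ^[n] k) := by
  induction n generalizing x k with
  | zero => rfl
  | succ n ih =>
    rw [Function.iterate_succ_apply, ih, Function.iterate_succ_apply']
    rfl

lemma phi2_coe (k : ℕ+) (hk : 3 ≤ (k:ℕ)) : ((phi2 k : ℕ+) : ℕ) = 2 * (k:ℕ) := by
  unfold phi2
  rw [if_neg]
  · simp
  · intro hle
    have : (k:ℕ) ≤ ((2:ℕ+):ℕ) := (PNat.coe_le_coe _ _).mpr hle
    simp at this
    omega

lemma phi2_iter_ge (n : ℕ) (k : ℕ+) (hk : 3 ≤ (k:ℕ)) :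
    ((phi2^[n] k : ℕ+):ℕ) = 2^n * (k:ℕ) := by
  induction n with
  | zero => simp
  | succ n ih =>
    rw [Function.iterate_succ_apply', phi2_coe _ (by rw [ih]; nlinarith [Nat.one_le_two_pow (n := n)]), ih]
    ring

lemma phi2_one : phi2 1 = 3 := by decide

lemma phi2_two : phi2 2 = 3 := by decide

lemma phi2_iter_one (n : ℕ) : ((phi2^[n+1] 1 : ℕ+):ℕ) = 3 * 2^n := by
  rw [Function.iterate_succ_apply, phi2_one, phi2_iter_ge n 3 (by norm_num)]
  norm_num; ring

lemma phi2_iter_two (n : ℕ) : ((phi2^[n+1] 2 : ℕ+):ℕ) = 3 * 2^n := by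
  rw [Function.iterate_succ_apply, phi2_two, phi2_iter_ge n 3 (by norm_num)]
  norm_num; ring

end Stmt14Aux

namespace Stmt14Aux

lemma not_T (a j : ℕ) (hj : 1 ≤ j) (k : ℕ+) (hk : (k:ℕ) ≤ j) (i : ℕ) :
    ((phi2^[a + 2^j + 2] k : ℕ+):ℕ) ≠ 3 * 2^(a + 2^i) := by
  set n := a + 2^j + 2 with hn
  have hk1 : 1 ≤ (k:ℕ) := k.one_le
  by_cases hk3 : 3 ≤ (k:ℕ)
  · rw [phi2_iter_ge n k hk3]
    intro heq
    by_cases hcase : a + 2^i < n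
    · obtain ⟨d, hd⟩ : ∃ d, n = (a+2^i) + d := ⟨n - (a+2^i), by omega⟩
      have hd1 : 1 ≤ d := by omega
      rw [hd, pow_add] at heq
      have hpos : 0 < 2^(a+2^i) := Nat.pow_pos (by norm_num)
      have hck : 2^d * (k:ℕ) = 3 := by
        have : 2^(a+2^i) * (2^d * (k:ℕ)) = 2^(a+2^i) * 3 := by ring_nf; ring_nf at heq; omega
        exact Nat.eq_of_mul_eq_mul_left hpos this
      have h2d : 2 ≤ 2^d := by
        calc 2 = 2^1 := by norm_num
        _ ≤ 2^d := Nat.pow_le_pow_right (by norm_num) hd1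
      nlinarith
    · obtain ⟨e, he⟩ : ∃ e, a + 2^i = n + e := ⟨(a + 2^i) - n, by omega⟩
      rw [he, pow_add] at heq
      have hpos : 0 < 2^n := Nat.pow_pos (by norm_num)
      have hkk : (k:ℕ) = 3 * 2^e := by
        have : 2^n * (k:ℕ) = 2^n * (3 * 2^e) := by
          have h' : 2^n = 2^(a+2^j)*2^2 := by rw [hn, pow_add]
          rw [h', heq, pow_add 2 n e, h']; ring
        exact Nat.eq_of_mul_eq_mul_left hpos this
      have hij : j < i := by
        by_contra h'
        push_neg at h'
        have : 2^i ≤ 2^j := Nat.pow_le_pow_right (by norm_num) h'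
        omega
      have h2i : 2*2^j ≤ 2^i := by
        calc 2*2^j = 2^(j+1) := by ring
        _ ≤ 2^i := Nat.pow_le_pow_right (by norm_num) (by omega)
      have hje : j ≤ e + 1 := by
        have hj2 : j < 2^j := Nat.lt_two_pow_self (n := j)
        omega
      have h1 : 2^j ≤ 2^(e+1) := Nat.pow_le_pow_right (by norm_num) hje
      have hj2 : j < 2^j := Nat.lt_two_pow_self (n := j)
      have h3 : (2:ℕ)^(e+1) = 2*2^e := by ring
      omega
  · have hk12 : (k:ℕ) = 1 ∨ (k:ℕ) = 2 := by omega
    have hcoe : ((phi2^[n] k:ℕ+):ℕ) = 3*2^(a+2^j+1) := by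
      have hnn : n = (a+2^j+1)+1 := by omega
      rcases hk12 with h|h
      · have hk' : k = 1 := PNat.coe_injective (by simp [h])
        rw [hk', hnn, phi2_iter_one]
      · have hk' : k = 2 := PNat.coe_injective (by simp [h])
        rw [hk', hnn, phi2_iter_two]
    rw [hcoe]
    intro heq
    have hpow : 2^(a+2^j+1) = 2^(a+2^i) := by omega
    have heq2 : a+2^j+1 = a+2^i := Nat.pow_right_injective (le_refl 2) hpow
    have hji : 2^i = 2^j + 1 := by omega
    rcases Nat.eq_zero_or_pos i with h0|h1
    · subst h0
      have : 0 < 2^j := Nat.pow_pos (by norm_num)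
      simp at hji
    · have d1 : 2 ∣ 2^i := dvd_pow_self 2 (by omega)
      have d2 : 2 ∣ 2^j := dvd_pow_self 2 (by omega)
      omega

end Stmt14Aux

open Stmt14Aux

/-- For `X = {0, 1}` discrete, the generalized shift system
`(X^ℕ, σ_{φ₂})` is Li-Yorke sensitive. -/
theorem stmt14 :
    ∃ κ > (0 : ℝ), ∀ x : ℕ+ → Bool, ∀ U : Set (ℕ+ → Bool), IsOpen U → x ∈ U →
      ∃ y ∈ U, scrambledPair pD (pshift phi2) x y ∧
        κ < limsup (fun n : ℕ => pD ((pshift phi2)^[n] x) ((pshift phi2)^[n] y)) atTop := by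
  classical
  refine ⟨1/2, by norm_num, ?_⟩
  intro x U hU hxU
  obtain ⟨I, u, hu, hI⟩ := isOpen_pi_iff.mp hU x hxU
  set a : ℕ := I.sup (fun i => ((i : ℕ+) : ℕ)) with ha
  set T : ℕ+ → Prop := fun k => ∃ j : ℕ, (k:ℕ) = 3 * 2^(a + 2^j) with hT
  set y : ℕ+ → Bool := fun k => if T k then !(x k) else x k with hy
  have hyT : ∀ k, T k → x k ≠ y k := by
    intro k hk
    simp only [hy, if_pos hk]
    simp
  have hynT : ∀ k, ¬ T k → x k = y k := by
    intro k hk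
    simp only [hy, if_neg hk]
  -- y ∈ U
  have hyU : y ∈ U := by
    apply hI
    intro i hi
    have hiy : x i = y i := by
      apply hynT
      rintro ⟨j, hj⟩
      have h1 : (i:ℕ) ≤ a := Finset.le_sup (f := fun i : ℕ+ => ((i : ℕ+) : ℕ)) hi
      have h2 : a < 3 * 2^(a + 2^j) := by
        calc a < 2^a := Nat.lt_two_pow_self (n := a)
        _ ≤ 2^(a+2^j) := Nat.pow_le_pow_right (by norm_num) (Nat.le_add_right _ _)
        _ ≤ 3*2^(a+2^j) := Nat.le_mul_of_pos_left _ (by norm_num)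
      omega
    exact hiy ▸ (hu i hi).2
  set D : ℕ → ℝ := fun n => pD ((pshift phi2)^[n] x) ((pshift phi2)^[n] y) with hD
  have hD1 : ∀ n, D n ≤ 1 := by
    intro n
    have := pD_le ((pshift phi2)^[n] x) ((pshift phi2)^[n] y) 0
      (fun k hk => absurd (lt_of_lt_of_le k.pos hk) (lt_irrefl 0))
    simpa using this
  have hD0 : ∀ n, 0 ≤ D n := fun n => pD_nonneg _ _
  have hbdd_le : IsBoundedUnder (· ≤ ·) atTop D := isBoundedUnder_of ⟨1, hD1⟩
  have hbdd_ge : IsBoundedUnder (· ≥ ·) atTop D := isBoundedUnder_of ⟨0, hD0⟩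
  -- limsup ≥ 3/4
  have hfreq : ∃ᶠ n in atTop, (3/4 : ℝ) ≤ D n := by
    rw [frequently_atTop]
    intro N
    refine ⟨a + 2^N + 1, by have := Nat.lt_two_pow_self (n := N); omega, ?_⟩
    have key : ∀ m : ℕ+, ((phi2^[a+2^N+1] m : ℕ+):ℕ) = 3 * 2^(a+2^N) → T (phi2^[a+2^N+1] m) :=
      fun m hm => ⟨N, hm⟩
    apply pD_ge
    · rw [pshift_iter, pshift_iter]
      exact hyT _ (key 1 (phi2_iter_one _))
    · rw [pshift_iter, pshift_iter]
      exact hyT _ (key 2 (phi2_iter_two _))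
  have hlimsup : (3/4 : ℝ) ≤ limsup D atTop := le_limsup_of_frequently_le hfreq hbdd_le
  -- liminf = 0
  have hDsmall : ∀ j : ℕ, 1 ≤ j → D (a + 2^j + 2) ≤ (1/2:ℝ)^j := by
    intro j hj
    apply pD_le
    intro k hk
    rw [pshift_iter, pshift_iter]
    apply hynT
    rintro ⟨i, hi⟩
    exact not_T a j hj k hk i hi
  have hliminf_le : ∀ ε : ℝ, 0 < ε → liminf D atTop ≤ ε := by
    intro ε hε
    obtain ⟨j0, hj0⟩ := exists_pow_lt_of_lt_one hε (by norm_num : (1/2:ℝ) < 1)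
    refine liminf_le_of_frequently_le ?_ hbdd_ge
    rw [frequently_atTop]
    intro N
    set j := max (max N j0) 1 with hjdef
    refine ⟨a + 2^j + 2, by have := Nat.lt_two_pow_self (n := j); omega, ?_⟩
    calc D (a + 2^j + 2) ≤ (1/2:ℝ)^j := hDsmall j (le_max_right _ _)
    _ ≤ (1/2:ℝ)^j0 := by
        apply pow_le_pow_of_le_one (by norm_num) (by norm_num)
        omega
    _ ≤ ε := hj0.le
  have hliminf_ge : (0:ℝ) ≤ liminf D atTop :=
    le_liminf_of_le hbdd_le.isCoboundedUnder_ge (Eventually.of_forall hD0)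
  have hliminf : liminf D atTop = 0 := by
    by_contra h
    have hpos : 0 < liminf D atTop := lt_of_le_of_ne hliminf_ge (Ne.symm h)
    have := hliminf_le (liminf D atTop / 2) (by linarith)
    linarith
  exact ⟨y, hyU, ⟨hliminf, lt_of_lt_of_le (by norm_num) hlimsup⟩,
    lt_of_lt_of_le (by norm_num) hlimsup⟩
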